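/- L³-norm of the ground-state spinor: let λ > 0, y ∈ ℝ³ and Φ ∈ ℂ² with ‖Φ‖² = 3λ/8, and set ψ(x) = U_{λ,y}(x)³·(Φ − c((x − y)/λ)Φ). Then ∫_{ℝ³} ‖ψ(x)‖³ dx = (3√3/4)·π². In particular the value is independent of λ and y, reflecting the conformal invariance of the spinorial L³-norm (formula (2.10)). -/

import Mathlib

open MeasureTheory

noncomputable section

/-- Points of Euclidean `ℝ³`. -/
abbrev R3 := EuclideanSpace ℝ (Fin 3)

/-- Spinors: `ℂ²` with its standard Hermitian inner product and norm. -/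
abbrev Spinor := EuclideanSpace ℂ (Fin 2)

/-- The standard bubble `U_{λ,y}(x) = (2λ/(λ² + ‖x − y‖²))^(1/2)`. -/
def bubble (l : ℝ) (y : R3) (x : R3) : ℝ :=
  Real.sqrt (2 * l / (l ^ 2 + ‖x - y‖ ^ 2))

/-- Pauli matrix `σ₁`. -/
def pauli1 : Matrix (Fin 2) (Fin 2) ℂ := !![0, 1; 1, 0]

/-- Pauli matrix `σ₂`. -/
def pauli2 : Matrix (Fin 2) (Fin 2) ℂ := !![0, -Complex.I; Complex.I, 0]

/-- Pauli matrix `σ₃`. -/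
def pauli3 : Matrix (Fin 2) (Fin 2) ℂ := !![1, 0; 0, -1]

/-- Clifford multiplication by `v ∈ ℝ³`: the matrix `c(v) = −i(v₁σ₁ + v₂σ₂ + v₃σ₃)`. -/
def cliffordMatrix (v : R3) : Matrix (Fin 2) (Fin 2) ℂ :=
  (-Complex.I) • ((v 0 : ℂ) • pauli1 + (v 1 : ℂ) • pauli2 + (v 2 : ℂ) • pauli3)

/-- The action of `c(v)` on a spinor. -/
def cliffordMul (v : R3) (φ : Spinor) : Spinor :=
  (WithLp.equiv 2 (Fin 2 → ℂ)).symm ((cliffordMatrix v).mulVec (WithLp.equiv 2 (Fin 2 → ℂ) φ))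

/-- The ground-state spinor `ψ(x) = U_{λ,y}(x)³·(Φ − c((x − y)/λ)Φ)`. -/
def groundSpinor (l : ℝ) (y : R3) (Φ : Spinor) (x : R3) : Spinor :=
  (bubble l y x ^ 3 : ℝ) • (Φ - cliffordMul (l⁻¹ • (x - y)) Φ)

/- ### Auxiliary lemmas -/

lemma aux_ball3 : (volume (Metric.ball (0:EuclideanSpace ℝ (Fin 3)) 1)).toReal = 4/3 * Real.pi := by
  rw [EuclideanSpace.volume_ball]
  have h52 : Real.Gamma ((Fintype.card (Fin 3) : ℝ)/2 + 1) = 3/4 * Real.sqrt Real.pi := by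
    have h12 : Real.Gamma (1/2) = Real.sqrt Real.pi := Real.Gamma_one_half_eq
    have h32 : Real.Gamma (3/2) = 1/2 * Real.sqrt Real.pi := by
      have := Real.Gamma_add_one (s := 1/2) (by norm_num)
      rw [show (3:ℝ)/2 = 1/2 + 1 by norm_num, this, h12]
    have := Real.Gamma_add_one (s := 3/2) (by norm_num)
    simp only [Fintype.card_fin]
    rw [show ((3:ℕ):ℝ)/2 + 1 = 3/2 + 1 by norm_num, this, h32]; ring
  rw [h52]
  have hπ : (0:ℝ) ≤ Real.pi := Real.pi_pos.le
  have hs : (0:ℝ) < Real.sqrt Real.pi := Real.sqrt_pos.2 Real.pi_pos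
  rw [ENNReal.toReal_mul]
  simp only [Fintype.card_fin, ENNReal.ofReal_one, one_pow, ENNReal.toReal_one,
    ENNReal.toReal_ofReal (by positivity : (0:ℝ) ≤ Real.sqrt Real.pi ^ 3 / (3/4 * Real.sqrt Real.pi))]
  rw [show Real.sqrt Real.pi ^ 3 = Real.sqrt Real.pi ^ 2 * Real.sqrt Real.pi by ring,
    Real.sq_sqrt hπ]
  field_simp

lemma aux_norm_sub_clifford (w : R3) (Φ : Spinor) :
    ‖Φ - cliffordMul w Φ‖ ^ 2 = (1 + ‖w‖ ^ 2) * ‖Φ‖ ^ 2 := by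
  have hn : ∀ v : Spinor, ‖v‖ ^ 2 = ‖v 0‖ ^ 2 + ‖v 1‖ ^ 2 := by
    intro v
    rw [EuclideanSpace.norm_eq, Real.sq_sqrt (by positivity)]
    simp [Fin.sum_univ_two]
  have hw : ‖w‖ ^ 2 = w 0 ^ 2 + w 1 ^ 2 + w 2 ^ 2 := by
    rw [EuclideanSpace.norm_eq, Real.sq_sqrt (by positivity)]
    simp [Fin.sum_univ_succ, Real.norm_eq_abs, sq_abs]; ring
  have hc0 : (cliffordMul w Φ) 0 =
      (-Complex.I * w 2) * Φ 0 + (-Complex.I * w 0 - w 1) * Φ 1 := by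
    simp [cliffordMul, cliffordMatrix, pauli1, pauli2, pauli3, Matrix.mulVec,
      dotProduct, Fin.sum_univ_two]
    simp [Complex.ext_iff]; ring_nf
    exact ⟨trivial, trivial⟩
  have hc1 : (cliffordMul w Φ) 1 =
      (-Complex.I * w 0 + w 1) * Φ 0 + (Complex.I * w 2) * Φ 1 := by
    simp [cliffordMul, cliffordMatrix, pauli1, pauli2, pauli3, Matrix.mulVec,
      dotProduct, Fin.sum_univ_two]
    simp [Complex.ext_iff]; ring_nf
    exact ⟨trivial, trivial⟩
  rw [hn, hn, hw]
  have hs0 : (Φ - cliffordMul w Φ) 0 = Φ 0 - ((-Complex.I * w 2) * Φ 0 + (-Complex.I * w 0 - w 1) * Φ 1) := by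
    simp [hc0]
  have hs1 : (Φ - cliffordMul w Φ) 1 = Φ 1 - ((-Complex.I * w 0 + w 1) * Φ 0 + (Complex.I * w 2) * Φ 1) := by
    simp [hc1]
  rw [hs0, hs1]
  simp only [Complex.sq_norm, Complex.normSq_apply]
  simp only [Complex.sub_re, Complex.sub_im, Complex.add_re, Complex.add_im, Complex.mul_re,
    Complex.mul_im, Complex.neg_re, Complex.neg_im, Complex.I_re, Complex.I_im,
    Complex.ofReal_re, Complex.ofReal_im]
  ring

open Set Filter Topology in
lemma aux_radial_int (l : ℝ) (hl : 0 < l) :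
    ∫ r in Ioi (0:ℝ), r ^ 2 / (l ^ 2 + r ^ 2) ^ 3 = Real.pi / (16 * l ^ 3) := by
  set F : ℝ → ℝ := fun r => Real.arctan (r / l) / (8 * l ^ 3) +
    (r ^ 3 - l ^ 2 * r) / (8 * l ^ 2 * (l ^ 2 + r ^ 2) ^ 2) with hF
  have hden : ∀ r : ℝ, (0:ℝ) < l ^ 2 + r ^ 2 := fun r => by positivity
  have hderiv : ∀ r ∈ Ici (0:ℝ), HasDerivAt F (r ^ 2 / (l ^ 2 + r ^ 2) ^ 3) r := by
    intro r _
    have h1 : HasDerivAt (fun r : ℝ => Real.arctan (r / l) / (8 * l ^ 3))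
        ((1 / (1 + (r / l) ^ 2)) * (1 / l) / (8 * l ^ 3)) r := by
      have := (Real.hasDerivAt_arctan (r / l)).comp r ((hasDerivAt_id r).div_const l)
      simpa using this.div_const (8 * l ^ 3)
    have h2 : HasDerivAt (fun r : ℝ => (r ^ 3 - l ^ 2 * r) / (8 * l ^ 2 * (l ^ 2 + r ^ 2) ^ 2))
        (((3 * r ^ 2 - l ^ 2) * (8 * l ^ 2 * (l ^ 2 + r ^ 2) ^ 2)
          - (r ^ 3 - l ^ 2 * r) * (8 * l ^ 2 * (2 * (l ^ 2 + r ^ 2) * (2 * r))))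
          / (8 * l ^ 2 * (l ^ 2 + r ^ 2) ^ 2) ^ 2) r := by
      have hnum : HasDerivAt (fun r : ℝ => r ^ 3 - l ^ 2 * r) (3 * r ^ 2 - l ^ 2) r := by
        have := ((hasDerivAt_pow 3 r).sub ((hasDerivAt_id r).const_mul (l ^ 2)))
        exact this.congr_deriv (by push_cast; ring)
      have hd : HasDerivAt (fun r : ℝ => 8 * l ^ 2 * (l ^ 2 + r ^ 2) ^ 2)
          (8 * l ^ 2 * (2 * (l ^ 2 + r ^ 2) * (2 * r))) r := by
        have hsq : HasDerivAt (fun r : ℝ => l ^ 2 + r ^ 2) (2 * r) r := by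
          simpa using ((hasDerivAt_pow 2 r).const_add (l ^ 2))
        have hb := (hasDerivAt_pow 2 (l ^ 2 + r ^ 2)).comp r hsq
        have := hb.const_mul (8 * l ^ 2)
        exact this.congr_deriv (by push_cast; ring)
      exact hnum.div hd (by positivity)
    have := h1.add h2
    refine this.congr_deriv ?_
    have hl2 : l ≠ 0 := ne_of_gt hl
    have h3 : l ^ 2 + r ^ 2 ≠ 0 := ne_of_gt (hden r)
    field_simp
    ring
  have hpos : ∀ r ∈ Ioi (0:ℝ), 0 ≤ r ^ 2 / (l ^ 2 + r ^ 2) ^ 3 := fun r _ => by positivity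
  have hcont : ContinuousWithinAt F (Ici 0) 0 := ((hderiv 0 Set.self_mem_Ici).continuousAt).continuousWithinAt
  have htop : Tendsto F atTop (𝓝 (Real.pi / 2 / (8 * l ^ 3) + 0)) := by
    apply Tendsto.add
    · apply Tendsto.div_const
      exact (tendsto_nhds_of_tendsto_nhdsWithin Real.tendsto_arctan_atTop).comp
        (tendsto_id.atTop_div_const hl)
    · have : Tendsto (fun r : ℝ => (r ^ 3 - l ^ 2 * r) / (8 * l ^ 2 * (l ^ 2 + r ^ 2) ^ 2)) atTop (𝓝 0) := by
        have hg : Tendsto (fun r : ℝ => 1 / (4 * l ^ 2 * r)) atTop (𝓝 0) := by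
          have h4 : Tendsto (fun r : ℝ => 4 * l ^ 2 * r) atTop atTop :=
            tendsto_id.const_mul_atTop (by positivity)
          have h5 := h4.inv_tendsto_atTop
          have : (fun r : ℝ => 1 / (4 * l ^ 2 * r)) = (fun r : ℝ => 4 * l ^ 2 * r)⁻¹ := by
            funext r; simp [one_div, Pi.inv_apply]
          rw [this]; exact h5
        refine squeeze_zero_norm' ?_ hg
        filter_upwards [eventually_ge_atTop (max l 1)] with r hr
        · have hrl : l ≤ r := le_trans (le_max_left _ _) hr
          have hr1 : (1:ℝ) ≤ r := le_trans (le_max_right _ _) hr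
          have hr0 : (0:ℝ) < r := lt_of_lt_of_le one_pos hr1
          have hl2r2 : l ^ 2 ≤ r ^ 2 := by nlinarith
          have habs : |8 * l ^ 2 * (l ^ 2 + r ^ 2) ^ 2| = 8 * l ^ 2 * (l ^ 2 + r ^ 2) ^ 2 :=
            abs_of_pos (by positivity)
          rw [Real.norm_eq_abs, abs_div, habs]
          have hnum : |r ^ 3 - l ^ 2 * r| ≤ 2 * r ^ 3 := by
            rw [abs_le]
            constructor <;> nlinarith [mul_le_mul_of_nonneg_right hl2r2 hr0.le]
          have hden2 : 8 * l ^ 2 * r ^ 4 ≤ 8 * l ^ 2 * (l ^ 2 + r ^ 2) ^ 2 := by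
            have h4 : r ^ 4 ≤ (l ^ 2 + r ^ 2) ^ 2 := by nlinarith [sq_nonneg l, sq_nonneg (l * r)]
            nlinarith [sq_nonneg l]
          calc |r ^ 3 - l ^ 2 * r| / (8 * l ^ 2 * (l ^ 2 + r ^ 2) ^ 2)
              ≤ 2 * r ^ 3 / (8 * l ^ 2 * r ^ 4) := by
                apply div_le_div₀ (by positivity) hnum (by positivity) hden2
            _ = 1 / (4 * l ^ 2 * r) := by field_simp; ring
      exact this
  have := integral_Ioi_of_hasDerivAt_of_nonneg hcont (fun x hx => hderiv x (Set.mem_Ici.mpr (le_of_lt hx))) hpos htop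
  rw [this, hF]
  simp [Real.arctan_zero]
  ring

/-- `L³`-norm of the ground-state spinor: with `‖Φ‖² = 3λ/8` and
`ψ(x) = U_{λ,y}(x)³·(Φ − c((x − y)/λ)Φ)`, one has `∫_{ℝ³} ‖ψ‖³ dx = (3√3/4)·π²`; in
particular the value is independent of `λ` and `y`. -/
theorem groundSpinor_L3_norm (l : ℝ) (hl : 0 < l) (y : R3) (Φ : Spinor)
    (hΦ : ‖Φ‖ ^ 2 = 3 * l / 8) :
    ∫ x : R3, ‖groundSpinor l y Φ x‖ ^ 3 = (3 * Real.sqrt 3 / 4) * Real.pi ^ 2 := by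
  have hl2 : l ≠ 0 := ne_of_gt hl
  have hs3 : (0:ℝ) ≤ Real.sqrt 3 := Real.sqrt_nonneg 3
  have hpoint : ∀ x : R3, ‖groundSpinor l y Φ x‖ ^ 3
      = 3 * Real.sqrt 3 * (l ^ 3 / (l ^ 2 + ‖x - y‖ ^ 2) ^ 3) := by
    intro x
    set r2 := ‖x - y‖ ^ 2 with hr2
    have hr2n : 0 ≤ r2 := sq_nonneg _
    have hden : (0:ℝ) < l ^ 2 + r2 := by positivity
    have hb : bubble l y x ^ 2 = 2 * l / (l ^ 2 + r2) :=
      Real.sq_sqrt (by positivity)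
    have hb0 : 0 ≤ bubble l y x := Real.sqrt_nonneg _
    have hw : ‖l⁻¹ • (x - y)‖ ^ 2 = r2 / l ^ 2 := by
      rw [norm_smul, mul_pow, Real.norm_eq_abs, sq_abs]
      field_simp
      exact hr2.symm
    have hb3 : (bubble l y x ^ 3) ^ 2 = (2 * l / (l ^ 2 + r2)) ^ 3 := by
      rw [← pow_mul, show 3 * 2 = 2 * 3 by norm_num, pow_mul, hb]
    have hnorm2 : ‖groundSpinor l y Φ x‖ ^ 2 = 3 * l ^ 2 / (l ^ 2 + r2) ^ 2 := by
      rw [groundSpinor, norm_smul, mul_pow, aux_norm_sub_clifford, hw, hΦ,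
        Real.norm_eq_abs, sq_abs, hb3]
      field_simp
      ring
    have hnorm : ‖groundSpinor l y Φ x‖ = Real.sqrt 3 * (l / (l ^ 2 + r2)) := by
      have h1 : ‖groundSpinor l y Φ x‖ ^ 2 = (Real.sqrt 3 * (l / (l ^ 2 + r2))) ^ 2 := by
        rw [hnorm2, mul_pow, Real.sq_sqrt (by norm_num : (0:ℝ) ≤ 3)]
        field_simp
      have h2 : (0:ℝ) ≤ Real.sqrt 3 * (l / (l ^ 2 + r2)) := by positivity
      nlinarith [norm_nonneg (groundSpinor l y Φ x)]
    rw [hnorm, mul_pow, show Real.sqrt 3 ^ 3 = Real.sqrt 3 ^ 2 * Real.sqrt 3 by ring,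
      Real.sq_sqrt (by norm_num : (0:ℝ) ≤ 3), div_pow]
  simp_rw [hpoint]
  have htrans : ∫ x : R3, 3 * Real.sqrt 3 * (l ^ 3 / (l ^ 2 + ‖x - y‖ ^ 2) ^ 3)
      = ∫ x : R3, 3 * Real.sqrt 3 * (l ^ 3 / (l ^ 2 + ‖x‖ ^ 2) ^ 3) :=
    integral_sub_right_eq_self (fun x : R3 => 3 * Real.sqrt 3 * (l ^ 3 / (l ^ 2 + ‖x‖ ^ 2) ^ 3)) y
  rw [htrans]
  have hsph := integral_fun_norm_addHaar (volume : Measure R3)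
    (fun r : ℝ => 3 * Real.sqrt 3 * (l ^ 3 / (l ^ 2 + r ^ 2) ^ 3))
  rw [hsph]
  rw [finrank_euclideanSpace_fin, measureReal_def, aux_ball3]
  have hint : ∫ r in Set.Ioi (0:ℝ), r ^ (3 - 1) • (3 * Real.sqrt 3 * (l ^ 3 / (l ^ 2 + r ^ 2) ^ 3))
      = 3 * Real.sqrt 3 * l ^ 3 * (Real.pi / (16 * l ^ 3)) := by
    rw [← aux_radial_int l hl, ← integral_const_mul]
    congr 1
    funext r
    simp only [smul_eq_mul]
    ring
  rw [hint]
  simp only [nsmul_eq_mul, smul_eq_mul]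
  field_simp
  ring
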